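/- Fix i ∈ [d] and subspaces U_j ⊆ R^{n_j} with orthonormal bases {u_{k,j}} for j ≠ i. Then the maximum over r_i-dimensional subspaces U_i of ‖P_{U₁⊗...⊗U_d}(T)‖² equals the sum of the r_i largest eigenvalues of the positive semidefinite matrix A_i = Σ_{j_l ∈ [r_l], l≠i} (T × ⊗_{l≠i} u_{j_l,l}) (T × ⊗_{l≠i} u_{j_l,l})ᵀ ∈ R^{n_i×n_i}. -/

import Mathlib

open scoped Matrix RealInnerProductSpace

/-- The contraction `T × (⊗_{l ≠ i} u_{j_l, l}) ∈ ℝ^{n_i}` of a `d`-mode tensor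
against one chosen vector in each mode other than `i`. -/
noncomputable def tContractAt {d : ℕ} {n r : Fin d → ℕ}
    (T : EuclideanSpace ℝ (∀ l, Fin (n l)))
    (u : ∀ l, Fin (r l) → (Fin (n l) → ℝ)) (i : Fin d)
    (j : ∀ l : {m : Fin d // m ≠ i}, Fin (r l.1)) : Fin (n i) → ℝ :=
  fun k => ∑ c : ∀ l, Fin (n l),
    if c i = k then T c * ∏ l : {m : Fin d // m ≠ i}, u l.1 (j l) (c l.1) else 0

/-- The positive semidefinite matrix
`A_i = ∑_{j_l ∈ [r_l], l ≠ i} (T × ⊗_{l≠i} u_{j_l,l})(T × ⊗_{l≠i} u_{j_l,l})ᵀ`. -/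
noncomputable def bigA {d : ℕ} {n r : Fin d → ℕ}
    (T : EuclideanSpace ℝ (∀ l, Fin (n l)))
    (u : ∀ l, Fin (r l) → (Fin (n l) → ℝ)) (i : Fin d) :
    Matrix (Fin (n i)) (Fin (n i)) ℝ :=
  Matrix.of fun a b => ∑ j : ∀ l : {m : Fin d // m ≠ i}, Fin (r l.1),
    tContractAt T u i j a * tContractAt T u i j b


-- rearrangement/talagrand step
lemma final_comb {N R : ℕ} (hR : R ≤ N) (lam : Fin N → ℝ) (hmono : Antitone lam)
    (γ : Fin N → ℝ) (h0 : ∀ m, 0 ≤ γ m) (h1 : ∀ m, γ m ≤ 1)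
    (hs : ∑ m, γ m = R) :
    ∑ m, lam m * γ m ≤ ∑ k : Fin R, lam (Fin.castLE hR k) := by
  rcases Nat.eq_zero_or_pos N with hN | hN
  · subst hN
    interval_cases R
    simp
  set t : ℝ := if h : R < N then lam ⟨R, h⟩ else lam ⟨N - 1, by omega⟩ with ht
  have hti : ∀ m : Fin N, m.val < R → t ≤ lam m := by
    intro m hm
    rw [ht]
    split_ifs with h
    · exact hmono (by simp [Fin.le_def]; omega)
    · exact hmono (by simp [Fin.le_def]; omega)
  have hto : ∀ m : Fin N, R ≤ m.val → lam m ≤ t := by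
    intro m hm
    rw [ht]
    split_ifs with h
    · exact hmono (by simp [Fin.le_def]; omega)
    · exact absurd hm (by have := m.isLt; omega)
  set S : Finset (Fin N) := Finset.univ.image (Fin.castLE hR) with hS
  have hmemS : ∀ m : Fin N, m ∈ S ↔ m.val < R := by
    intro m
    constructor
    · intro hm
      obtain ⟨k, -, hk⟩ := Finset.mem_image.1 hm
      rw [← hk]
      exact k.isLt
    · intro hm
      exact Finset.mem_image.2 ⟨⟨m.val, hm⟩, Finset.mem_univ _, by ext; simp⟩
  have hinj : Function.Injective (Fin.castLE hR) := Fin.castLE_injective hR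
  have hRHS : ∑ k : Fin R, lam (Fin.castLE hR k) = ∑ m ∈ S, lam m := by
    rw [hS, Finset.sum_image (fun a _ b _ h => hinj h)]
  have key : ∑ m, (lam m - t) * γ m ≤ ∑ m ∈ S, (lam m - t) := by
    rw [← Finset.sum_add_sum_compl S]
    have hA : ∑ m ∈ S, (lam m - t) * γ m ≤ ∑ m ∈ S, (lam m - t) := by
      refine Finset.sum_le_sum fun m hm => ?_
      have := hti m ((hmemS m).1 hm)
      nlinarith [h1 m, h0 m]
    have hB : ∑ m ∈ Sᶜ, (lam m - t) * γ m ≤ 0 := by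
      refine Finset.sum_nonpos fun m hm => ?_
      have hm' : R ≤ m.val := by
        by_contra hc
        exact (Finset.mem_compl.1 hm) ((hmemS m).2 (by omega))
      have := hto m hm'
      nlinarith [h0 m]
    linarith
  have hcard : (S.card : ℝ) = R := by
    rw [hS, Finset.card_image_of_injective _ hinj]; simp
  have e1 : ∑ m, (lam m - t) * γ m = ∑ m, lam m * γ m - t * R := by
    rw [← hs]
    rw [Finset.mul_sum, ← Finset.sum_sub_distrib]
    congr 1; ext m; ring
  have e2 : ∑ m ∈ S, (lam m - t) = ∑ m ∈ S, lam m - t * R := by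
    rw [Finset.sum_sub_distrib, Finset.sum_const, ← hcard]
    push_cast; ring
  rw [hRHS]
  linarith [key, e1 ▸ key]

lemma euclid_inner_eq_dot {m : ℕ} (x y : EuclideanSpace ℝ (Fin m)) :
    ⟪x, y⟫ = x ⬝ᵥ y := by
  simp [PiLp.inner_apply, dotProduct, RCLike.inner_apply, mul_comm]

-- orthonormal rows of square matrix give complete system
lemma dual_orthonormal {N : ℕ} (e : Fin N → Fin N → ℝ)
    (he : ∀ j k, e j ⬝ᵥ e k = if j = k then (1 : ℝ) else 0) :
    ∀ a c : Fin N, ∑ m, e m a * e m c = if a = c then (1 : ℝ) else 0 := by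
  intro a c
  set M : Matrix (Fin N) (Fin N) ℝ := Matrix.of e with hM
  have h1 : M * Mᵀ = 1 := by
    ext j k
    simpa [hM, Matrix.mul_apply, Matrix.one_apply, dotProduct] using he j k
  have h2 : Mᵀ * M = 1 := mul_eq_one_comm.1 h1
  have := congrFun (congrFun h2 a) c
  simpa [hM, Matrix.mul_apply, Matrix.one_apply] using this

lemma parseval_dual {N : ℕ} (e : Fin N → Fin N → ℝ)
    (he : ∀ j k, e j ⬝ᵥ e k = if j = k then (1 : ℝ) else 0) (x : Fin N → ℝ) :
    ∑ m, (x ⬝ᵥ e m) ^ 2 = x ⬝ᵥ x := by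
  have hd := dual_orthonormal e he
  calc ∑ m, (x ⬝ᵥ e m) ^ 2
      = ∑ m, ∑ a, ∑ c, (x a * x c) * (e m a * e m c) := by
        refine Finset.sum_congr rfl fun m _ => ?_
        rw [sq, dotProduct, Finset.sum_mul_sum]
        exact Finset.sum_congr rfl fun a _ => Finset.sum_congr rfl fun c _ => by ring
    _ = ∑ a, ∑ c, (x a * x c) * ∑ m, e m a * e m c := by
        rw [Finset.sum_comm]
        refine Finset.sum_congr rfl fun a _ => ?_
        rw [Finset.sum_comm]
        refine Finset.sum_congr rfl fun c _ => ?_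
        rw [Finset.mul_sum]
    _ = x ⬝ᵥ x := by
        rw [dotProduct]
        refine Finset.sum_congr rfl fun a _ => ?_
        rw [Finset.sum_eq_single a (fun c _ hc => by rw [hd a c, if_neg (Ne.symm hc)]; ring)
          (fun h => absurd (Finset.mem_univ a) h)]
        rw [hd a a, if_pos rfl]; ring

lemma rayleigh_decomp {N : ℕ} (A : Matrix (Fin N) (Fin N) ℝ) (lam : Fin N → ℝ)
    (e : Fin N → Fin N → ℝ)
    (he : ∀ j k, e j ⬝ᵥ e k = if j = k then (1 : ℝ) else 0)
    (heig : ∀ k, A.mulVec (e k) = lam k • e k) (x : Fin N → ℝ) :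
    x ⬝ᵥ A.mulVec x = ∑ m, lam m * (x ⬝ᵥ e m) ^ 2 := by
  have hd := dual_orthonormal e he
  have hexp : x = ∑ m, (x ⬝ᵥ e m) • e m := by
    funext a
    rw [Finset.sum_apply]
    simp only [Pi.smul_apply, smul_eq_mul, dotProduct]
    calc x a = ∑ c, x c * ∑ m, e m c * e m a := by
          rw [Finset.sum_eq_single a (fun c _ hc => by rw [hd c a, if_neg hc]; ring)
            (fun h => absurd (Finset.mem_univ a) h), hd a a, if_pos rfl]; ring
      _ = ∑ m, (∑ c, x c * e m c) * e m a := by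
          simp_rw [Finset.mul_sum]
          rw [Finset.sum_comm]
          refine Finset.sum_congr rfl fun m _ => ?_
          rw [Finset.sum_mul]
          exact Finset.sum_congr rfl fun c _ => by ring
  have hmv : A.mulVec x = ∑ m, (x ⬝ᵥ e m) • (lam m • e m) := by
    conv_lhs => rw [hexp, ← Matrix.mulVecLin_apply, map_sum]
    refine Finset.sum_congr rfl fun m _ => ?_
    rw [map_smul, Matrix.mulVecLin_apply, heig]
  rw [hmv]
  simp only [dotProduct, Finset.sum_apply, Pi.smul_apply, smul_eq_mul, Finset.mul_sum]
  rw [Finset.sum_comm]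
  refine Finset.sum_congr rfl fun m _ => ?_
  set S := ∑ i, x i * e m i with hSdef
  have h2 : ∑ a, x a * (S * (lam m * e m a)) = S * lam m * ∑ a, x a * e m a := by
    rw [Finset.mul_sum]
    exact Finset.sum_congr rfl fun a _ => by ring
  rw [h2, ← hSdef, sq]
  ring

def toE {m : ℕ} (x : Fin m → ℝ) : EuclideanSpace ℝ (Fin m) := WithLp.toLp 2 x

lemma orthonormal_of_dot {m R : ℕ} (w : Fin R → (Fin m → ℝ))
    (hw : ∀ j k, w j ⬝ᵥ w k = if j = k then (1 : ℝ) else 0) :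
    Orthonormal ℝ (fun k => toE (w k)) := by
  rw [orthonormal_iff_ite]
  intro j k
  rw [euclid_inner_eq_dot]
  simpa [toE] using hw j k

lemma bessel_dot {m R : ℕ} (w : Fin R → (Fin m → ℝ))
    (hw : ∀ j k, w j ⬝ᵥ w k = if j = k then (1 : ℝ) else 0) (x : Fin m → ℝ) :
    ∑ k, (x ⬝ᵥ w k) ^ 2 ≤ x ⬝ᵥ x := by
  have h := Orthonormal.sum_inner_products_le (𝕜 := ℝ)
    (toE x) (orthonormal_of_dot w hw) (s := Finset.univ)
  have hx : ‖toE x‖ ^ 2 = x ⬝ᵥ x := by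
    rw [← real_inner_self_eq_norm_sq, euclid_inner_eq_dot]
    rfl
  rw [hx] at h
  refine le_trans (le_of_eq ?_) h
  refine Finset.sum_congr rfl fun k _ => ?_
  rw [euclid_inner_eq_dot, Real.norm_eq_abs, sq_abs, dotProduct_comm]
  rfl

lemma kyfan {N R : ℕ} (hR : R ≤ N) (A : Matrix (Fin N) (Fin N) ℝ)
    (lam : Fin N → ℝ) (e : Fin N → Fin N → ℝ)
    (he : ∀ j k, e j ⬝ᵥ e k = if j = k then (1 : ℝ) else 0)
    (heig : ∀ k, A.mulVec (e k) = lam k • e k) (hmono : Antitone lam)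
    (w : Fin R → (Fin N → ℝ))
    (hw : ∀ j k, w j ⬝ᵥ w k = if j = k then (1 : ℝ) else 0) :
    ∑ k, w k ⬝ᵥ A.mulVec (w k) ≤ ∑ k : Fin R, lam (Fin.castLE hR k) := by
  have h1 : ∑ k, w k ⬝ᵥ A.mulVec (w k) = ∑ m, lam m * ∑ k, (w k ⬝ᵥ e m) ^ 2 :=
    calc ∑ k, w k ⬝ᵥ A.mulVec (w k) = ∑ k, ∑ m, lam m * (w k ⬝ᵥ e m) ^ 2 :=
          Finset.sum_congr rfl fun k _ => rayleigh_decomp A lam e he heig (w k)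
      _ = ∑ m, ∑ k, lam m * (w k ⬝ᵥ e m) ^ 2 := Finset.sum_comm
      _ = ∑ m, lam m * ∑ k, (w k ⬝ᵥ e m) ^ 2 :=
          Finset.sum_congr rfl fun m _ => (Finset.mul_sum _ _ _).symm
  rw [h1]
  refine final_comb hR lam hmono _ (fun m => Finset.sum_nonneg fun k _ => sq_nonneg _)
    (fun m => ?_) ?_
  · have hb := bessel_dot w hw (e m)
    have : e m ⬝ᵥ e m = 1 := by simpa using he m m
    rw [this] at hb
    refine le_trans (le_of_eq (Finset.sum_congr rfl fun k _ => ?_)) hb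
    rw [dotProduct_comm]
  · calc ∑ m, ∑ k, (w k ⬝ᵥ e m) ^ 2 = ∑ k, ∑ m, (w k ⬝ᵥ e m) ^ 2 := Finset.sum_comm
      _ = ∑ k : Fin R, (1 : ℝ) := Finset.sum_congr rfl fun k _ => by
          rw [parseval_dual e he (w k)]; simpa using hw k k
      _ = R := by simp


lemma norm_proj_sq {ι H : Type*} [Fintype ι] [NormedAddCommGroup H]
    [InnerProductSpace ℝ H] [FiniteDimensional ℝ H] [DecidableEq H] {v : ι → H}
    (hv : Orthonormal ℝ v) (x : H) :
    ‖(Submodule.orthogonalProjection (Submodule.span ℝ (Set.range v)) x : H)‖ ^ 2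
      = ∑ k, ⟪v k, x⟫ ^ 2 := by
  classical
  have hset : (↑(Finset.univ.image v) : Set H) = Set.range v := by
    simp
  set U : Submodule ℝ H := Submodule.span ℝ (Set.range v) with hU
  have hU' : Submodule.span ℝ (↑(Finset.univ.image v) : Set H) = U := by rw [hset]
  let b : OrthonormalBasis _ ℝ U := (OrthonormalBasis.span hv Finset.univ).map
    (LinearIsometryEquiv.ofEq _ _ hU')
  have hb : ∀ i, (b i : H) = v i := by
    intro i
    simp [b, OrthonormalBasis.span_apply]
  have hP : U.orthogonalProjection x = ∑ i, ⟪(b i : H), x⟫ • b i :=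
    b.orthogonalProjectionOnto_apply_eq_sum x
  have h1 : ‖(U.orthogonalProjection x : H)‖ ^ 2
      = ⟪(U.orthogonalProjection x : H), x⟫ := by
    have h2 : ⟪(U.orthogonalProjection x : H), x - (U.orthogonalProjection x : H)⟫ = 0 := by
      refine Submodule.inner_right_of_mem_orthogonal (U.orthogonalProjection x).2 ?_
      exact Submodule.sub_starProjection_mem_orthogonal (K := U) x
    have := inner_sub_right (𝕜 := ℝ) (U.orthogonalProjection x : H) x
      (U.orthogonalProjection x : H)
    rw [real_inner_self_eq_norm_sq] at this
    linarith [this ▸ h2]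
  rw [h1, hP]
  push_cast
  rw [sum_inner]
  refine Finset.sum_coe_sort Finset.univ (fun i => ⟪v i, x⟫ ^ 2) ▸ ?_
  refine Finset.sum_congr rfl fun i _ => ?_
  rw [real_inner_smul_left, hb, sq]

lemma euclid_sum_apply {ι κ : Type*} [Fintype ι] (f : ι → EuclideanSpace ℝ κ) (a : κ) :
    (∑ j, f j) a = ∑ j, f j a := by
  exact map_sum (PiLp.projₗ 2 (fun _ : κ => ℝ) a (𝕜 := ℝ)) f Finset.univ


lemma dot_bigA {d : ℕ} {n r : Fin d → ℕ}
    (T : EuclideanSpace ℝ (∀ l, Fin (n l)))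
    (u : ∀ l, Fin (r l) → (Fin (n l) → ℝ)) (i : Fin d) (x : Fin (n i) → ℝ) :
    x ⬝ᵥ (bigA T u i).mulVec x
      = ∑ j : ∀ l : {m : Fin d // m ≠ i}, Fin (r l.1), (x ⬝ᵥ tContractAt T u i j) ^ 2 := by
  have h1 : x ⬝ᵥ (bigA T u i).mulVec x
      = ∑ a, ∑ c, ∑ j : ∀ l : {m : Fin d // m ≠ i}, Fin (r l.1),
          x a * (tContractAt T u i j a * tContractAt T u i j c) * x c := by
    refine Finset.sum_congr rfl fun a _ => ?_
    rw [Matrix.mulVec, dotProduct, Finset.mul_sum]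
    refine Finset.sum_congr rfl fun c _ => ?_
    rw [bigA, Matrix.of_apply, Finset.sum_mul, Finset.mul_sum]
    exact Finset.sum_congr rfl fun j _ => by ring
  rw [h1]
  rw [show (∑ a, ∑ c, ∑ j : ∀ l : {m : Fin d // m ≠ i}, Fin (r l.1),
        x a * (tContractAt T u i j a * tContractAt T u i j c) * x c)
      = ∑ a, ∑ j : ∀ l : {m : Fin d // m ≠ i}, Fin (r l.1), ∑ c,
        x a * (tContractAt T u i j a * tContractAt T u i j c) * x c from
    Finset.sum_congr rfl fun a _ => Finset.sum_comm]
  rw [Finset.sum_comm]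
  refine Finset.sum_congr rfl fun j _ => ?_
  rw [sq, dotProduct, Finset.sum_mul_sum]
  refine Finset.sum_congr rfl fun a _ => Finset.sum_congr rfl fun c _ => by ring

lemma key_proj {d : ℕ} {n r : Fin d → ℕ} (i : Fin d)
    (T : EuclideanSpace ℝ (∀ l, Fin (n l)))
    (u : ∀ l, Fin (r l) → (Fin (n l) → ℝ))
    (hu : ∀ l, l ≠ i → ∀ j k, u l j ⬝ᵥ u l k = if j = k then (1 : ℝ) else 0)
    (w : Fin (r i) → (Fin (n i) → ℝ))
    (hw : ∀ j k, w j ⬝ᵥ w k = if j = k then (1 : ℝ) else 0) :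
    ‖(Submodule.orthogonalProjection (Submodule.span ℝ
        {v : EuclideanSpace ℝ (∀ l, Fin (n l)) | ∃ x : ∀ l, Fin (n l) → ℝ,
          x i ∈ Submodule.span ℝ (Set.range w) ∧
          (∀ l, l ≠ i → x l ∈ Submodule.span ℝ (Set.range (u l))) ∧
          ∀ a, v a = ∏ l, x l (a l)}) T : EuclideanSpace ℝ (∀ l, Fin (n l)))‖ ^ 2
      = ∑ k, w k ⬝ᵥ (bigA T u i).mulVec (w k) := by
  classical
  set S : Set (EuclideanSpace ℝ (∀ l, Fin (n l))) :=
    {v : EuclideanSpace ℝ (∀ l, Fin (n l)) | ∃ x : ∀ l, Fin (n l) → ℝ,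
      x i ∈ Submodule.span ℝ (Set.range w) ∧
      (∀ l, l ≠ i → x l ∈ Submodule.span ℝ (Set.range (u l))) ∧
      ∀ a, v a = ∏ l, x l (a l)} with hS
  set b : ∀ l, Fin (r l) → (Fin (n l) → ℝ) := Function.update u i w with hb
  have hbi : b i = w := Function.update_self i w u
  have hbl : ∀ l, l ≠ i → b l = u l := fun l hl => Function.update_of_ne hl w u
  have hbo : ∀ l j k, b l j ⬝ᵥ b l k = if j = k then (1 : ℝ) else 0 := by
    intro l
    by_cases hl : l = i
    · subst hl; rw [hbi]; exact hw
    · rw [hbl l hl]; exact hu l hl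
  set E : (∀ l, Fin (r l)) → EuclideanSpace ℝ (∀ l, Fin (n l)) :=
    fun j => WithLp.toLp 2 (fun a => ∏ l, b l (j l) (a l)) with hE
  have hip : ∀ v v' : EuclideanSpace ℝ (∀ l, Fin (n l)),
      ⟪v, v'⟫ = ∑ c, v c * v' c := fun v v' => by
    simp [PiLp.inner_apply, RCLike.inner_apply, mul_comm]
  have hEinner : ∀ j j', ⟪E j, E j'⟫ = ∏ l, (b l (j l) ⬝ᵥ b l (j' l)) := by
    intro j j'
    rw [hip]
    rw [show (∏ l, (b l (j l) ⬝ᵥ b l (j' l)))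
        = ∏ l, ∑ al, b l (j l) al * b l (j' l) al from rfl]
    rw [Finset.prod_univ_sum, Fintype.piFinset_univ]
    exact Finset.sum_congr rfl fun c _ => (Finset.prod_mul_distrib
      (s := Finset.univ) (f := fun l => b l (j l) (c l)) (g := fun l => b l (j' l) (c l))).symm
  have hEon : Orthonormal ℝ E := by
    rw [orthonormal_iff_ite]
    intro j j'
    rw [hEinner]
    by_cases hjj : j = j'
    · subst hjj
      rw [if_pos rfl]
      refine Finset.prod_eq_one fun l _ => ?_
      rw [hbo, if_pos rfl]
    · rw [if_neg hjj]
      obtain ⟨l, hl⟩ := Function.ne_iff.1 hjj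
      exact Finset.prod_eq_zero (Finset.mem_univ l) (by rw [hbo, if_neg hl])
  have hrange : Set.range E ⊆ S := by
    rintro v ⟨j, rfl⟩
    refine ⟨fun l => b l (j l), ?_, fun l hl => ?_, fun a => rfl⟩
    · show b i (j i) ∈ _
      rw [hbi]; exact Submodule.subset_span (Set.mem_range_self _)
    · show b l (j l) ∈ _
      rw [hbl l hl]; exact Submodule.subset_span (Set.mem_range_self _)
  have hSsub : S ⊆ ↑(Submodule.span ℝ (Set.range E)) := by
    rintro v ⟨x, hxi, hxl, hva⟩
    have hx : ∀ l, ∃ c : Fin (r l) → ℝ, ∑ jl, c jl • b l jl = x l := by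
      intro l
      by_cases hl : l = i
      · subst hl; rw [hbi]; exact (Submodule.mem_span_range_iff_exists_fun ℝ).1 hxi
      · rw [hbl l hl]; exact (Submodule.mem_span_range_iff_exists_fun ℝ).1 (hxl l hl)
    choose c hc using hx
    have hv : v = ∑ j : ∀ l, Fin (r l), (∏ l, c l (j l)) • E j := by
      ext a
      rw [euclid_sum_apply, hva a]
      have hxa : ∀ l, x l (a l) = ∑ jl, c l jl * b l jl (a l) := by
        intro l
        rw [← hc l, Finset.sum_apply]
        exact Finset.sum_congr rfl fun jl _ => rfl
      calc ∏ l, x l (a l) = ∏ l, ∑ jl, c l jl * b l jl (a l) :=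
            Finset.prod_congr rfl fun l _ => hxa l
        _ = ∑ j : ∀ l, Fin (r l), ∏ l, c l (j l) * b l (j l) (a l) := by
            rw [Finset.prod_univ_sum, Fintype.piFinset_univ]
        _ = ∑ j : ∀ l, Fin (r l), (∏ l, c l (j l)) • E j a := by
            refine Finset.sum_congr rfl fun j _ => ?_
            rw [Finset.prod_mul_distrib, smul_eq_mul]
    rw [hv]
    exact Submodule.sum_mem _ fun j _ =>
      Submodule.smul_mem _ _ (Submodule.subset_span (Set.mem_range_self j))
  have hspan : Submodule.span ℝ (Set.range E) = Submodule.span ℝ S := by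
    refine le_antisymm (Submodule.span_le.2 (hrange.trans Submodule.subset_span)) ?_
    exact Submodule.span_le.2 hSsub
  rw [← hspan, norm_proj_sq hEon T]
  have hcontr : ∀ j : ∀ l, Fin (r l),
      ⟪E j, T⟫ = w (j i) ⬝ᵥ tContractAt T u i (fun l => j l.1) := by
    intro j
    have hL : ⟪E j, T⟫
        = ∑ c, w (j i) (c i) * (T c * ∏ l : {m : Fin d // m ≠ i}, u l.1 (j l.1) (c l.1)) := by
      rw [hip]
      refine Finset.sum_congr rfl fun c _ => ?_
      have hsplit : E j c = w (j i) (c i) * ∏ l : {m : Fin d // m ≠ i}, u l.1 (j l.1) (c l.1) := by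
        show (∏ l, b l (j l) (c l)) = _
        rw [Fintype.prod_eq_mul_prod_compl i (fun l => b l (j l) (c l)), hbi]
        congr 1
        rw [Finset.prod_subtype (p := fun m => m ≠ i) ({i}ᶜ : Finset (Fin d))
          (fun x => by simp) (fun l => b l (j l) (c l))]
        exact Finset.prod_congr rfl fun l _ => by rw [hbl l.1 l.2]
      rw [hsplit]
      ring
    have hR : w (j i) ⬝ᵥ tContractAt T u i (fun l => j l.1)
        = ∑ c, w (j i) (c i) * (T c * ∏ l : {m : Fin d // m ≠ i}, u l.1 (j l.1) (c l.1)) := by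
      rw [dotProduct]
      simp only [tContractAt]
      rw [show ∑ k, w (j i) k * ∑ c : ∀ l, Fin (n l),
            (if c i = k then T c * ∏ l : {m : Fin d // m ≠ i}, u l.1 (j l.1) (c l.1) else 0)
          = ∑ k, ∑ c : ∀ l, Fin (n l), w (j i) k *
            (if c i = k then T c * ∏ l : {m : Fin d // m ≠ i}, u l.1 (j l.1) (c l.1) else 0) from
        Finset.sum_congr rfl fun k _ => Finset.mul_sum _ _ _]
      rw [Finset.sum_comm]
      refine Finset.sum_congr rfl fun c _ => ?_
      rw [Finset.sum_eq_single (c i) (fun k _ hk => by rw [if_neg (fun h => hk h.symm), mul_zero])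
        (fun h => absurd (Finset.mem_univ _) h), if_pos rfl]
    rw [hL, hR]
  calc ∑ j : ∀ l, Fin (r l), ⟪E j, T⟫ ^ 2
      = ∑ j : ∀ l, Fin (r l), (w (j i) ⬝ᵥ tContractAt T u i (fun l => j l.1)) ^ 2 :=
        Finset.sum_congr rfl fun j _ => by rw [hcontr j]
    _ = ∑ p : Fin (r i) × (∀ l : {m : Fin d // m ≠ i}, Fin (r l.1)),
          (w p.1 ⬝ᵥ tContractAt T u i p.2) ^ 2 :=
        Fintype.sum_equiv (Equiv.piSplitAt i fun l => Fin (r l)) _ _ (fun j => rfl)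
    _ = ∑ k, ∑ j' : ∀ l : {m : Fin d // m ≠ i}, Fin (r l.1),
          (w k ⬝ᵥ tContractAt T u i j') ^ 2 := by exact Fintype.sum_prod_type _
    _ = ∑ k, w k ⬝ᵥ (bigA T u i).mulVec (w k) :=
        Finset.sum_congr rfl fun k _ => (dot_bigA T u i (w k)).symm

/-- fix `i` and subspaces `U_l = span(u_{1,l},…,u_{r_l,l})` with
orthonormal bases for `l ≠ i`.  The maximum over `r_i`-dimensional subspaces
`U_i ⊆ ℝ^{n_i}` of `‖P_{U₁⊗⋯⊗U_d}(T)‖²` equals the sum of the `r_i` largest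
eigenvalues of the positive semidefinite matrix `A_i` (whose eigenvalues are
given by the antitone `lam` with orthonormal eigenvectors `e`), and it is
attained. -/
theorem stmt17 {d : ℕ} (n r : Fin d → ℕ) (i : Fin d) (hri : r i ≤ n i)
    (T : EuclideanSpace ℝ (∀ l, Fin (n l)))
    (u : ∀ l, Fin (r l) → (Fin (n l) → ℝ))
    (hu : ∀ l, l ≠ i → ∀ j k, u l j ⬝ᵥ u l k = if j = k then (1 : ℝ) else 0)
    (lam : Fin (n i) → ℝ) (e : Fin (n i) → (Fin (n i) → ℝ))
    (he : ∀ j k, e j ⬝ᵥ e k = if j = k then (1 : ℝ) else 0)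
    (heig : ∀ k, (bigA T u i).mulVec (e k) = lam k • e k)
    (hmono : Antitone lam) :
    IsGreatest {val : ℝ | ∃ Ui : Submodule ℝ (Fin (n i) → ℝ),
        Module.finrank ℝ Ui = r i ∧
        val = ‖(Submodule.orthogonalProjection (Submodule.span ℝ
            {v : EuclideanSpace ℝ (∀ l, Fin (n l)) | ∃ x : ∀ l, Fin (n l) → ℝ,
              x i ∈ Ui ∧ (∀ l, l ≠ i → x l ∈ Submodule.span ℝ (Set.range (u l))) ∧
              ∀ a, v a = ∏ l, x l (a l)}) T : EuclideanSpace ℝ (∀ l, Fin (n l)))‖ ^ 2}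
      (∑ k : Fin (r i), lam (Fin.castLE hri k)) := by
  constructor
  · -- membership
    set w₀ : Fin (r i) → (Fin (n i) → ℝ) := fun k => e (Fin.castLE hri k) with hw₀def
    have hw₀ : ∀ j k, w₀ j ⬝ᵥ w₀ k = if j = k then (1 : ℝ) else 0 := by
      intro j k
      rw [hw₀def]
      rw [he (Fin.castLE hri j) (Fin.castLE hri k)]
      congr 1
      simp only [eq_iff_iff]
      exact ⟨fun h => Fin.castLE_injective hri h, fun h => h ▸ rfl⟩
    refine ⟨Submodule.span ℝ (Set.range w₀), ?_, ?_⟩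
    · have hli : LinearIndependent ℝ w₀ := by
        have := (orthonormal_of_dot w₀ hw₀).linearIndependent.map'
          (WithLp.linearEquiv 2 ℝ (Fin (n i) → ℝ)).toLinearMap (LinearEquiv.ker _)
        exact this
      rw [finrank_span_eq_card hli, Fintype.card_fin]
    · rw [key_proj i T u hu w₀ hw₀]
      refine Finset.sum_congr rfl fun k _ => ?_
      rw [hw₀def]
      rw [heig (Fin.castLE hri k), dotProduct_smul, smul_eq_mul]
      have : e (Fin.castLE hri k) ⬝ᵥ e (Fin.castLE hri k) = 1 := by
        rw [he, if_pos rfl]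
      rw [this, mul_one]
  · -- upper bound
    rintro val ⟨Ui, hrank, hval⟩
    set Ui' : Submodule ℝ (EuclideanSpace ℝ (Fin (n i))) :=
      Ui.map (WithLp.linearEquiv 2 ℝ (Fin (n i) → ℝ)).symm.toLinearMap with hUi'
    have hfr : Module.finrank ℝ Ui' = r i := by
      rw [hUi', LinearEquiv.finrank_map_eq]; exact hrank
    let b := stdOrthonormalBasis ℝ Ui'
    set w : Fin (r i) → (Fin (n i) → ℝ) :=
      fun k => WithLp.ofLp ((b (Fin.cast hfr.symm k)) : EuclideanSpace ℝ (Fin (n i))) with hwdef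
    have hw : ∀ j k, w j ⬝ᵥ w k = if j = k then (1 : ℝ) else 0 := by
      intro j k
      have h2 := (orthonormal_iff_ite.1 b.orthonormal) (Fin.cast hfr.symm j)
        (Fin.cast hfr.symm k)
      rw [Submodule.coe_inner, euclid_inner_eq_dot] at h2
      rw [hwdef]
      rw [h2]
      by_cases hjk : j = k
      · subst hjk; simp
      · have hc2 : Fin.cast hfr.symm j ≠ Fin.cast hfr.symm k := by
          intro hc
          have h5 := congrArg Fin.val hc
          exact hjk (Fin.ext h5)
        simp [hjk, hc2]
    have hspanw : Submodule.span ℝ (Set.range w) = Ui := by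
      apply le_antisymm
      · rw [Submodule.span_le]
        rintro x ⟨k, rfl⟩
        obtain ⟨y, hy, hyx⟩ := Submodule.mem_map.1 (SetLike.coe_mem (b (Fin.cast hfr.symm k)))
        show WithLp.ofLp ((b (Fin.cast hfr.symm k)) : EuclideanSpace ℝ (Fin (n i))) ∈ Ui
        rw [← hyx]
        simpa using hy
      · intro x hx
        have hx2 : WithLp.toLp 2 x ∈ Ui' := Submodule.mem_map.2 ⟨x, hx, rfl⟩
        have hxc : WithLp.toLp 2 x = ∑ m, b.repr ⟨_, hx2⟩ m •
            ((b m : Ui') : EuclideanSpace ℝ (Fin (n i))) := by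
          have h3 := congrArg Ui'.subtype (b.sum_repr ⟨_, hx2⟩).symm
          simpa [map_sum] using h3
        have hxc' : x = ∑ m, b.repr ⟨_, hx2⟩ m •
            WithLp.ofLp ((b m : Ui') : EuclideanSpace ℝ (Fin (n i))) := by
          have h4 := congrArg WithLp.ofLp hxc
          simpa [WithLp.ofLp_sum] using h4
        rw [hxc']
        refine Submodule.sum_mem _ fun m _ => Submodule.smul_mem _ _ ?_
        apply Submodule.subset_span
        refine ⟨Fin.cast hfr m, ?_⟩
        have hcc : Fin.cast hfr.symm (Fin.cast hfr m) = m := Fin.ext rfl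
        show WithLp.ofLp ((b (Fin.cast hfr.symm (Fin.cast hfr m)))
          : EuclideanSpace ℝ (Fin (n i))) = _
        rw [hcc]
    rw [hval, ← hspanw, key_proj i T u hu w hw]
    exact kyfan hri (bigA T u i) lam e he heig hmono w hw
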